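/- The Tsallis extropy of the uniform distribution on N points, namely f(N) = (N - 1 - (N-1)^α/N^{α-1})/(α-1), is increasing in N for every α > 0, α ≠ 1. -/

import Mathlib

private lemma amgm_lt' (α s : ℝ) (hα : 0 < α) (hα1 : α < 1) (hs : 0 < s) :
    1 ≤ α * s ^ (α - 1) + (1 - α) * s ^ α := by
  have h := Real.geom_mean_le_arith_mean2_weighted (w₁ := α) (w₂ := 1 - α)
    (p₁ := s ^ (α - 1)) (p₂ := s ^ α) hα.le (by linarith)
    (Real.rpow_pos_of_pos hs _).le (Real.rpow_pos_of_pos hs _).le (by ring)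
  calc (1:ℝ) = (s ^ (α - 1)) ^ α * (s ^ α) ^ (1 - α) := by
        rw [← Real.rpow_mul hs.le, ← Real.rpow_mul hs.le, ← Real.rpow_add hs,
          show (α - 1) * α + α * (1 - α) = 0 by ring, Real.rpow_zero]
    _ ≤ _ := h

private lemma amgm_gt' (α s : ℝ) (hα1 : 1 < α) (hs : 0 < s) :
    α * s ^ (α - 1) + (1 - α) * s ^ α ≤ 1 := by
  have hα0 : 0 < α := by linarith
  have h := Real.geom_mean_le_arith_mean2_weighted (w₁ := 1/α) (w₂ := (α-1)/α)
    (p₁ := 1) (p₂ := s ^ α) (by positivity) (div_nonneg (by linarith) (by linarith)) zero_le_one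
    (Real.rpow_pos_of_pos hs _).le (by field_simp; ring)
  have e : (1:ℝ) ^ (1/α) * (s ^ α) ^ ((α-1)/α) = s ^ (α - 1) := by
    rw [Real.one_rpow, one_mul, ← Real.rpow_mul hs.le]
    congr 1
    field_simp
  rw [e] at h
  have h2 := mul_le_mul_of_nonneg_left h hα0.le
  have h3 : α * (1/α * 1 + (α-1)/α * s ^ α) = 1 + (α - 1) * s ^ α := by
    field_simp
  rw [h3] at h2
  nlinarith [h2]

private lemma hasDeriv_g' (α x : ℝ) (hx : 0 < x) :
    HasDerivAt (fun y : ℝ => y ^ α * (y + 1) ^ (1 - α))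
      (α * (x / (x + 1)) ^ (α - 1) + (1 - α) * (x / (x + 1)) ^ α) x := by
  have hx1 : 0 < x + 1 := by linarith
  have h1 : HasDerivAt (fun y : ℝ => y ^ α) (1 * α * x ^ (α - 1)) x :=
    (hasDerivAt_id x).rpow_const (Or.inl hx.ne')
  have h2 : HasDerivAt (fun y : ℝ => (y + 1) ^ (1 - α)) (1 * (1 - α) * (x + 1) ^ (1 - α - 1)) x :=
    ((hasDerivAt_id x).add_const 1).rpow_const (Or.inl hx1.ne')
  have h : HasDerivAt (fun y : ℝ => y ^ α * (y + 1) ^ (1 - α)) _ x := h1.mul h2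
  convert h using 1
  have ha : (x + 1) ^ (α - 1) ≠ 0 := (Real.rpow_pos_of_pos hx1 _).ne'
  have hb : (x + 1) ^ α ≠ 0 := (Real.rpow_pos_of_pos hx1 _).ne'
  rw [Real.div_rpow hx.le hx1.le, Real.div_rpow hx.le hx1.le,
    show (1:ℝ) - α - 1 = -α by ring, Real.rpow_neg hx1.le α,
    show (1:ℝ) - α = -(α - 1) by ring, Real.rpow_neg hx1.le (α - 1),
    div_eq_mul_inv, div_eq_mul_inv]
  ring

theorem tsallis_extropy_uniform_increasing (α : ℝ) (hα : 0 < α) (hα1 : α ≠ 1)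
    (N : ℕ) (hN : 1 ≤ N) :
    ((N : ℝ) - 1 - ((N : ℝ) - 1) ^ α / (N : ℝ) ^ (α - 1)) / (α - 1) ≤
      (((N : ℕ) + 1 : ℝ) - 1 - (((N : ℕ) + 1 : ℝ) - 1) ^ α / ((N : ℕ) + 1 : ℝ) ^ (α - 1)) / (α - 1) := by
  have hN1 : (1:ℝ) ≤ (N : ℝ) := by exact_mod_cast hN
  have hab : (N : ℝ) - 1 < (N : ℝ) := by linarith
  -- continuity
  have hcont : ContinuousOn (fun y : ℝ => y ^ α * (y + 1) ^ (1 - α))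
      (Set.Icc ((N : ℝ) - 1) (N : ℝ)) := by
    apply ContinuousOn.mul
    · exact continuousOn_id.rpow_const (fun x _ => Or.inr hα.le)
    · apply ContinuousOn.rpow_const (continuousOn_id.add continuousOn_const)
      intro x hx
      have : (N : ℝ) - 1 ≤ x := hx.1
      exact Or.inl (ne_of_gt (by simp only [Pi.add_apply, id_eq]; linarith))
  obtain ⟨c, hc, hceq⟩ := exists_hasDerivAt_eq_slope
    (fun y : ℝ => y ^ α * (y + 1) ^ (1 - α))
    (fun x => α * (x / (x + 1)) ^ (α - 1) + (1 - α) * (x / (x + 1)) ^ α)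
    hab hcont
    (fun x hx => hasDeriv_g' α x (by have := hx.1; nlinarith))
  have hc0 : 0 < c := by have := hc.1; nlinarith
  have hs : 0 < c / (c + 1) := by positivity
  rw [show (N : ℝ) - ((N : ℝ) - 1) = 1 by ring, div_one] at hceq
  -- hceq : α * s^(α-1) + (1-α) * s^α = g N - g (N-1)
  have key : ∀ x y : ℝ, 0 < y → x ^ α / y ^ (α - 1) = x ^ α * y ^ (1 - α) := by
    intro x y hy
    rw [show (1:ℝ) - α = -(α - 1) by ring, Real.rpow_neg hy.le, div_eq_mul_inv]
  have hNpos : (0:ℝ) < (N : ℝ) := by linarith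
  have hN1pos : (0:ℝ) < (N : ℝ) + 1 := by linarith
  rw [key _ _ hNpos, show ((N : ℕ) + 1 : ℝ) - 1 = (N : ℝ) by push_cast; ring,
    show ((N : ℕ) + 1 : ℝ) = (N : ℝ) + 1 by push_cast; ring, key _ _ hN1pos]
  -- goal: (N - 1 - g(N-1))/(α-1) ≤ (N + 1 - 1 - g N)/(α-1)
  rcases lt_or_gt_of_ne hα1 with hlt | hgt
  · -- α < 1 : denominator negative, need numerator of RHS ≤ numerator of LHS
    have hD : 1 ≤ (N : ℝ) ^ α * ((N : ℝ) + 1) ^ (1 - α)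
        - ((N : ℝ) - 1) ^ α * ((N : ℝ) - 1 + 1) ^ (1 - α) := by
      rw [← hceq]; exact amgm_lt' α _ hα hlt hs
    rw [show (N : ℝ) - 1 + 1 = (N : ℝ) by ring] at hD
    apply div_le_div_of_nonpos_of_le (by linarith)
    linarith
  · have hD : (N : ℝ) ^ α * ((N : ℝ) + 1) ^ (1 - α)
        - ((N : ℝ) - 1) ^ α * ((N : ℝ) - 1 + 1) ^ (1 - α) ≤ 1 := by
      rw [← hceq]; exact amgm_gt' α _ hgt hs
    rw [show (N : ℝ) - 1 + 1 = (N : ℝ) by ring] at hD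
    apply div_le_div_of_nonneg_right (by linarith) -- may need name fix
    linarith
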